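/- Let K = ℂ((x)) and let M be a finite-dimensional differential module over K. If M ⊗_K M is regular, then the dual module M^∨ = Hom_K(M, K), with derivation (∂φ)(m) = (φ(m))' − φ(∂m), satisfies: M ⊗_K M^∨ is regular. -/
import Mathlib


noncomputable section

open scoped TensorProduct

/-- `K = ℂ((x))`, the field of formal Laurent series. -/
abbrev K : Type := LaurentSeries ℂ

/-- `O = ℂ[[x]]`, the ring of formal power series. -/
abbrev O : Type := PowerSeries ℂ

/-- The formal derivative `f ↦ f'` on `ℂ((x))`. -/
def der (f : K) : K := LaurentSeries.derivative ℂ f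

/-- The element `x ∈ ℂ((x))`. -/
def xK : K := algebraMap O K PowerSeries.X

/-- Any `ℂ((x))`-module is a `ℂ[[x]]`-module by restriction of scalars. -/
instance (M : Type*) [AddCommGroup M] [Module K M] : Module O M :=
  Module.compHom M (algebraMap O K)

/-- A differential-module structure on a `K`-vector space: an additive map satisfying the
Leibniz rule with respect to `d/dx` on `K = ℂ((x))`. -/
def IsDerivation {M : Type*} [AddCommGroup M] [Module K M] (D : M → M) : Prop :=
  (∀ a b : M, D (a + b) = D a + D b) ∧ ∀ (f : K) (m : M), D (f • m) = der f • m + f • D m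

/-- A `ℂ[[x]]`-lattice in a `K`-vector space: a finitely generated `ℂ[[x]]`-submodule
spanning `M` over `K`. -/
def IsLattice {M : Type*} [AddCommGroup M] [Module K M] (L : Submodule O M) : Prop :=
  L.FG ∧ Submodule.span K (L : Set M) = ⊤

/-- A differential module `(M, ∂)` over `ℂ((x))` is regular if it contains a
`ℂ[[x]]`-lattice stable under `x∂`. -/
def IsRegularDiff {M : Type*} [AddCommGroup M] [Module K M] (D : M → M) : Prop :=
  ∃ L : Submodule O M, IsLattice L ∧ ∀ m ∈ L, xK • D m ∈ L

lemma osmul {M : Type*} [AddCommGroup M] [Module K M] (o : O) (m : M) :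
    o • m = (algebraMap O K o) • m := rfl

lemma xK_ne_zero : xK ≠ 0 := by
  simp only [xK, ne_eq, map_eq_zero_iff _ (IsFractionRing.injective O K)]
  exact PowerSeries.X_ne_zero

lemma clear_denom (f : K) : ∃ (n : ℕ) (g : O), xK ^ n * f = algebraMap O K g := by
  obtain ⟨⟨g, d⟩, h⟩ := IsLocalization.surj (Submonoid.powers (PowerSeries.X : O)) f
  obtain ⟨n, hn⟩ := d.2
  refine ⟨n, g, ?_⟩
  have hx : xK ^ n = algebraMap O K (d : O) := by rw [xK, ← map_pow]; exact congrArg _ hn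
  rw [mul_comm, hx]
  exact h

lemma xpow_smul_mem {M : Type*} [AddCommGroup M] [Module K M]
    (L : Submodule O M) {m : M} (hm : m ∈ L) (n : ℕ) : xK ^ n • m ∈ L := by
  have h : xK ^ n • m = ((PowerSeries.X : O) ^ n) • m := by
    rw [osmul, map_pow]; rfl
  rw [h]
  exact L.smul_mem _ hm

lemma exists_pow_smul_mem {M : Type*} [AddCommGroup M] [Module K M]
    (L : Submodule O M) (hspan : Submodule.span K (L : Set M) = ⊤) (p : M) :
    ∃ n : ℕ, xK ^ n • p ∈ L := by
  have hp : p ∈ Submodule.span K (L : Set M) := hspan ▸ Submodule.mem_top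
  induction hp using Submodule.span_induction with
  | mem x hx => exact ⟨0, by simpa using hx⟩
  | zero => exact ⟨0, by simp⟩
  | add x y hx hy ihx ihy =>
      obtain ⟨a, ha⟩ := ihx; obtain ⟨b, hb⟩ := ihy
      refine ⟨a + b, ?_⟩
      have h1 : xK ^ (a + b) • (x + y) = xK ^ b • (xK ^ a • x) + xK ^ a • (xK ^ b • y) := by
        rw [smul_add, smul_smul, smul_smul, ← pow_add, ← pow_add, add_comm b a]
      rw [h1]
      exact L.add_mem (xpow_smul_mem L ha b) (xpow_smul_mem L hb a)
  | smul f x hx ih =>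
      obtain ⟨a, ha⟩ := ih
      obtain ⟨n, g, hg⟩ := clear_denom f
      refine ⟨n + a, ?_⟩
      have h1 : xK ^ (n + a) • (f • x) = g • (xK ^ a • x) := by
        rw [osmul, ← hg, smul_smul, smul_smul, pow_add]
        congr 1
        ring
      rw [h1]
      exact L.smul_mem g ha

lemma span_top_of_exists_pow {M : Type*} [AddCommGroup M] [Module K M]
    (L : Submodule O M) (h : ∀ p : M, ∃ n : ℕ, xK ^ n • p ∈ L) :
    Submodule.span K (L : Set M) = ⊤ := by
  rw [eq_top_iff]
  intro p _
  obtain ⟨n, hn⟩ := h p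
  have h1 : p = (xK ^ n)⁻¹ • (xK ^ n • p) := by
    rw [smul_smul, inv_mul_cancel₀ (pow_ne_zero _ xK_ne_zero), one_smul]
  rw [h1]
  exact Submodule.smul_mem _ _ (Submodule.subset_span hn)

lemma regular_of_embedding {N P : Type*} [AddCommGroup N] [Module K N]
    [AddCommGroup P] [Module K P]
    (DN : N → N) (DP : P → P) (j : N →ₗ[K] P) (hj : Function.Injective j)
    (hcomm : ∀ n, j (DN n) = DP (j n))
    (L : Submodule O P) (hFG : L.FG)
    (hsp : ∀ p : P, ∃ n : ℕ, xK ^ n • p ∈ L)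
    (hstab : ∀ p ∈ L, xK • DP p ∈ L) :
    IsRegularDiff DN := by
  let jO : N →ₗ[O] P :=
    { toFun := j, map_add' := j.map_add,
      map_smul' := fun o n => by
        simp only [RingHom.id_apply]
        rw [osmul, j.map_smul, osmul] }
  refine ⟨Submodule.comap jO L, ⟨⟨?_, ?_⟩, ?_⟩⟩
  · -- FG
    have hL : IsNoetherian O ↥L := isNoetherian_of_fg_of_noetherian L hFG
    have hres : ∀ x ∈ Submodule.comap jO L, jO x ∈ L := fun x hx => hx
    let f : ↥(Submodule.comap jO L) →ₗ[O] ↥L := jO.restrict hres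
    have hf : Function.Injective f := by
      intro a b hab
      apply Subtype.ext
      apply hj
      exact congrArg Subtype.val hab
    have : IsNoetherian O ↥(Submodule.comap jO L) := isNoetherian_of_injective f hf
    exact (Submodule.fg_top _).mp (IsNoetherian.noetherian ⊤)
  · -- span
    apply span_top_of_exists_pow
    intro p
    obtain ⟨k, hk⟩ := hsp (j p)
    refine ⟨k, ?_⟩
    show j (xK ^ k • p) ∈ L
    rw [map_smul]
    exact hk
  · -- stability
    intro n hn
    show j (xK • DN n) ∈ L
    rw [map_smul, hcomm]
    exact hstab (j n) hn


def DeltaEnd {T : Type*} [AddCommGroup T] [Module K T] (DT : T → T) (hDT : IsDerivation DT)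
    (g : T →ₗ[K] T) : T →ₗ[K] T where
  toFun t := DT (g t) - g (DT t)
  map_add' a b := by
    show DT (g (a + b)) - g (DT (a + b)) = _
    rw [map_add, hDT.1, hDT.1, map_add]
    abel
  map_smul' c t := by
    show DT (g (c • t)) - g (DT (c • t)) = c • (DT (g t) - g (DT t))
    simp only [map_smul, map_add, hDT.2, smul_sub]
    abel

@[simp] lemma DeltaEnd_apply {T : Type*} [AddCommGroup T] [Module K T] (DT : T → T)
    (hDT : IsDerivation DT) (g : T →ₗ[K] T) (t : T) :
    DeltaEnd DT hDT g (t) = DT (g t) - g (DT t) := rfl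

def Hlat {T : Type*} [AddCommGroup T] [Module K T] (L : Submodule O T) :
    Submodule O (T →ₗ[K] T) where
  carrier := { g | ∀ t ∈ L, g t ∈ L }
  add_mem' := fun {a b} ha hb t ht => by
    rw [LinearMap.add_apply]; exact L.add_mem (ha t ht) (hb t ht)
  zero_mem' := fun t ht => by simp
  smul_mem' := fun o {g} hg t ht => by
    rw [osmul, LinearMap.smul_apply, ← osmul]
    exact L.smul_mem o (hg t ht)

lemma mem_Hlat {T : Type*} [AddCommGroup T] [Module K T] {L : Submodule O T}
    {g : T →ₗ[K] T} : g ∈ Hlat L ↔ ∀ t ∈ L, g t ∈ L := Iff.rfl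

lemma Hlat_stab {T : Type*} [AddCommGroup T] [Module K T]
    (DT : T → T) (hDT : IsDerivation DT) (L : Submodule O T)
    (hstab : ∀ t ∈ L, xK • DT t ∈ L) :
    ∀ g ∈ Hlat L, xK • DeltaEnd DT hDT g ∈ Hlat L := by
  intro g hg t ht
  show (xK • DeltaEnd DT hDT g) t ∈ L
  rw [LinearMap.smul_apply, DeltaEnd_apply, smul_sub, ← map_smul]
  exact L.sub_mem (hstab _ (hg t ht)) (hg _ (hstab t ht))

lemma Hlat_span {T : Type*} [AddCommGroup T] [Module K T]
    (L : Submodule O T) (hFG : L.FG) (hspan : Submodule.span K (L : Set T) = ⊤) :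
    ∀ g : T →ₗ[K] T, ∃ n : ℕ, xK ^ n • g ∈ Hlat L := by
  classical
  intro g
  have hclear := exists_pow_smul_mem L hspan
  choose kf hkf using hclear
  obtain ⟨s, hs⟩ := hFG
  set n := s.sup fun t => kf (g t) with hn
  have key : ∀ t ∈ Submodule.span O (↑s : Set T), xK ^ n • g t ∈ L := by
    intro t ht
    induction ht using Submodule.span_induction with
    | mem x hx =>
        have h1 : kf (g x) ≤ n := Finset.le_sup (f := fun t => kf (g t)) hx
        have h2 : xK ^ n • g x = xK ^ (n - kf (g x)) • (xK ^ (kf (g x)) • g x) := by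
          rw [smul_smul, ← pow_add, Nat.sub_add_cancel h1]
        rw [h2]
        exact xpow_smul_mem L (hkf (g x)) _
    | zero => simp
    | add x y hx hy ihx ihy =>
        rw [map_add, smul_add]; exact L.add_mem ihx ihy
    | smul o x hx ih =>
        rw [osmul, map_smul, smul_comm, ← osmul]
        exact L.smul_mem o ih
  refine ⟨n, fun t ht => ?_⟩
  show (xK ^ n • g) t ∈ L
  rw [LinearMap.smul_apply]
  exact key t (by rw [hs]; exact ht)

lemma noZeroSMulDivisors_OK {T : Type*} [AddCommGroup T] [Module K T] :
    NoZeroSMulDivisors O T := by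
  refine ⟨fun {o t} h => ?_⟩
  rw [osmul] at h
  rcases smul_eq_zero.mp h with h | h
  · exact Or.inl ((map_eq_zero_iff _ (IsFractionRing.injective O K)).mp h)
  · exact Or.inr h

def resO {T : Type*} [AddCommGroup T] [Module K T] (L : Submodule O T)
    (g : T →ₗ[K] T) (hg : g ∈ Hlat L) : ↥L →ₗ[O] ↥L where
  toFun l := ⟨g l.1, hg l.1 l.2⟩
  map_add' a b := Subtype.ext (map_add g a.1 b.1)
  map_smul' o l := Subtype.ext (g.map_smul (algebraMap O K o) l.1)

set_option maxHeartbeats 2000000 in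
lemma Hlat_fg {T : Type*} [AddCommGroup T] [Module K T]
    (L : Submodule O T) (hFG : L.FG) (hspan : Submodule.span K (L : Set T) = ⊤) :
    (Hlat L).FG := by
  have hNZT : NoZeroSMulDivisors O T := noZeroSMulDivisors_OK
  have hLfin : Module.Finite O ↥L := Module.Finite.iff_fg.mpr hFG
  have hLfree : Module.Free O ↥L := Module.free_of_finite_type_torsion_free'
  let ρ : ↥(Hlat L) →ₗ[O] (↥L →ₗ[O] ↥L) :=
    { toFun := fun g => resO L g.1 g.2
      map_add' := fun a b => rfl
      map_smul' := fun o a => rfl }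
  have hρ : Function.Injective ρ := by
    intro a b hab
    have heq : ∀ t (ht : t ∈ L), a.1 t = b.1 t := fun t ht =>
      congrArg Subtype.val (LinearMap.congr_fun hab ⟨t, ht⟩)
    apply Subtype.ext
    have hker : Submodule.span K (L : Set T) ≤ LinearMap.ker (a.1 - b.1) := by
      apply Submodule.span_le.mpr
      intro t ht
      simp only [SetLike.mem_coe, LinearMap.mem_ker, LinearMap.sub_apply, sub_eq_zero]
      exact heq t ht
    rw [hspan, top_le_iff] at hker
    exact sub_eq_zero.mp (LinearMap.ker_eq_top.mp hker)
  have hNoe : IsNoetherian O (↥L →ₗ[O] ↥L) := inferInstance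
  have : IsNoetherian O ↥(Hlat L) := isNoetherian_of_injective ρ hρ
  exact (Submodule.fg_top _).mp (IsNoetherian.noetherian ⊤)

def Jmap (M : Type) [AddCommGroup M] [Module K M] :
    M ⊗[K] (M →ₗ[K] K) →ₗ[K] ((M ⊗[K] M) →ₗ[K] (M ⊗[K] M)) :=
  (LinearMap.rTensorHom M) ∘ₗ (dualTensorHom K M M) ∘ₗ
    (TensorProduct.comm K M (M →ₗ[K] K)).toLinearMap

lemma Jmap_tmul (M : Type) [AddCommGroup M] [Module K M] (m : M) (φ : M →ₗ[K] K)
    (a b : M) : Jmap M (m ⊗ₜ φ) (a ⊗ₜ b) = φ a • (m ⊗ₜ[K] b) := by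
  simp [Jmap, LinearMap.rTensorHom, TensorProduct.smul_tmul']

lemma Jmap_inj (M : Type) [AddCommGroup M] [Module K M] [FiniteDimensional K M] :
    Function.Injective (Jmap M) := by
  rcases subsingleton_or_nontrivial M with hM | hM
  · intro a b _
    have : ∀ z : M ⊗[K] (M →ₗ[K] K), z = 0 := by
      intro z
      induction z using TensorProduct.induction_on with
      | zero => rfl
      | tmul m φ => rw [Subsingleton.elim m 0, TensorProduct.zero_tmul]
      | add x y hx hy => rw [hx, hy, add_zero]
    rw [this a, this b]
  · -- injectivity of dualTensorHom part
    have h1 : Function.Injective (dualTensorHom K M M) := by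
      intro a b hab
      have hb := Module.Free.chooseBasis K M
      apply (dualTensorHomEquivOfBasis (N := M) hb).injective
      rw [dualTensorHomEquivOfBasis_apply, dualTensorHomEquivOfBasis_apply, hab]
    -- retraction for rTensor
    obtain ⟨w, hw⟩ := exists_ne (0 : M)
    obtain ⟨ψ0, hψ0⟩ : ∃ φ : M →ₗ[K] K, φ w ≠ 0 := by
      by_contra h
      push_neg at h
      exact hw ((Module.forall_dual_apply_eq_zero_iff K w).mp h)
    set ψ : M →ₗ[K] K := (ψ0 w)⁻¹ • ψ0 with hψ
    have hψw : ψ w = 1 := by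
      rw [hψ, LinearMap.smul_apply, smul_eq_mul, inv_mul_cancel₀ hψ0]
    have h2 : Function.Injective (LinearMap.rTensorHom (R := K) (N := M) (P := M) M) := by
      intro a b hab
      ext v
      have key : ∀ f : M →ₗ[K] M, ∀ v : M,
          (TensorProduct.rid K M) ((LinearMap.lTensor M ψ)
            ((LinearMap.rTensorHom M f) (v ⊗ₜ w))) = f v := by
        intro f v
        simp [hψw]
      rw [← key a v, ← key b v, hab]
    intro a b hab
    apply h1.comp ((TensorProduct.comm K M (M →ₗ[K] K)).injective)
    exact h2 hab

/-- **Regularity of `M ⊗ M` implies regularity of `M ⊗ M^∨`.**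
Let `M` be a finite-dimensional differential module over `K = ℂ((x))` and let
`M^∨ = Hom_K(M, K)` carry the dual derivation `(∂φ)(m) = (φ m)' - φ(∂m)`.
If `M ⊗_K M` is regular then so is `M ⊗_K M^∨`. -/
theorem tensor_dual_regular_of_tensor_square_regular
    (M : Type) [AddCommGroup M] [Module K M] [FiniteDimensional K M]
    (D : M → M) (hD : IsDerivation D)
    (DT : M ⊗[K] M → M ⊗[K] M) (hDT : IsDerivation DT)
    (hDTmul : ∀ (m n : M), DT (m ⊗ₜ n) = D m ⊗ₜ n + m ⊗ₜ D n)
    (hreg : IsRegularDiff DT)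
    (DD : (M →ₗ[K] K) → (M →ₗ[K] K)) (hDD : IsDerivation DD)
    (hDDapp : ∀ (φ : (M →ₗ[K] K)) (m : M), DD φ m = der (φ m) - φ (D m))
    (DT2 : M ⊗[K] (M →ₗ[K] K) → M ⊗[K] (M →ₗ[K] K)) (hDT2 : IsDerivation DT2)
    (hDT2mul : ∀ (m : M) (φ : (M →ₗ[K] K)),
      DT2 (m ⊗ₜ φ) = D m ⊗ₜ φ + m ⊗ₜ DD φ) :
    IsRegularDiff DT2 := by
  have hDT0 : DT 0 = 0 := by
    have h := hDT.1 0 0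
    rw [add_zero] at h
    exact (left_eq_add.mp h)
  have hDT20 : DT2 0 = 0 := by
    have h := hDT2.1 0 0
    rw [add_zero] at h
    exact (left_eq_add.mp h)
  have hcomm : ∀ u, Jmap M (DT2 u) = DeltaEnd DT hDT (Jmap M u) := by
    intro u
    induction u using TensorProduct.induction_on with
    | zero =>
        rw [hDT20, map_zero]
        apply LinearMap.ext
        intro t
        simp [DeltaEnd_apply, hDT0]
    | tmul m φ =>
        rw [hDT2mul, map_add]
        apply TensorProduct.ext'
        intro a b
        simp only [LinearMap.add_apply, Jmap_tmul, DeltaEnd_apply, hDTmul, map_add,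
          hDT.2, hDDapp, smul_add, sub_smul]
        abel
    | add u v ihu ihv =>
        rw [hDT2.1, map_add, map_add, ihu, ihv]
        apply LinearMap.ext
        intro t
        simp only [LinearMap.add_apply, DeltaEnd_apply, map_add, hDT.1]
        abel
  obtain ⟨L, ⟨hFG, hspan⟩, hstab⟩ := hreg
  exact regular_of_embedding DT2 (fun g => DeltaEnd DT hDT g) (Jmap M) (Jmap_inj M) hcomm
    (Hlat L) (Hlat_fg L hFG hspan) (Hlat_span L hFG hspan) (Hlat_stab DT hDT L hstab)
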